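/- For any strict liveness formula ψ_SL and state q of an MDP M, if q satisfies ψ_SL, then there exists k ∈ ℕ such that the k-th unrolling M_k^q of M rooted at q satisfies ψ_SL. Consequently, if a weak safety formula ψ_WS is violated by an MDP M, there is an MDP M' whose underlying unlabeled graph is a tree, M' ≼ M, and M' violates ψ_WS. -/

import Mathlib

open Classical
attribute [local instance 10] Classical.propDecidable

noncomputable section

universe u v w

/-- A sub-probability measure on a finite set `Q`. -/
structure SubProb (Q : Type u) [Fintype Q] where
  val : Q → ℝ
  nonneg : ∀ q, 0 ≤ val q
  sum_le_one : ∑ q, val q ≤ 1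

namespace SubProb

variable {Q : Type u} {Q' : Type v} [Fintype Q] [Fintype Q']

/-- The measure of a set of states. -/
def mass (μ : SubProb Q) (A : Set Q) : ℝ := ∑ q, A.indicator μ.val q

/-- The zero sub-probability measure. -/
def zero (Q : Type u) [Fintype Q] : SubProb Q :=
  ⟨fun _ => 0, fun _ => le_refl 0, by simp⟩

/-- Extension (by zero) of a sub-probability measure to a disjoint sum (left). -/
def toLeft (μ : SubProb Q) : SubProb (Q ⊕ Q') where
  val := Sum.elim μ.val fun _ => 0
  nonneg := by rintro (q | q); exacts [μ.nonneg q, le_refl 0]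
  sum_le_one := by simpa [Fintype.sum_sum_type] using μ.sum_le_one

/-- Extension (by zero) of a sub-probability measure to a disjoint sum (right). -/
def toRight (μ : SubProb Q') : SubProb (Q ⊕ Q') where
  val := Sum.elim (fun _ => 0) μ.val
  nonneg := by rintro (q | q); exacts [le_refl 0, μ.nonneg q]
  sum_le_one := by simpa [Fintype.sum_sum_type] using μ.sum_le_one

end SubProb

/-- The image of a set under a binary relation. -/
def relImage {A : Type u} {B : Type v} (R : A → B → Prop) (S : Set A) : Set B :=
  {b | ∃ a ∈ S, R a b}

/-- A set is `R`-closed if its image under `R` is itself. -/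
def RClosed {Q : Type u} (R : Q → Q → Prop) (A : Set Q) : Prop := relImage R A = A

/-- `μ ≼_R μ'` : `μ'` simulates `μ` with respect to `R`. -/
def SubProb.simLE {Q : Type u} [Fintype Q] (R : Q → Q → Prop) (μ μ' : SubProb Q) : Prop :=
  ∀ A : Set Q, RClosed R A → μ.mass A ≤ μ'.mass A

/-- `μ ≈_R μ'` : `μ` is equivalent to `μ'` with respect to `R`. -/
def SubProb.simEq {Q : Type u} [Fintype Q] (R : Q → Q → Prop) (μ μ' : SubProb Q) : Prop :=
  ∀ A : Set Q, RClosed R A → μ.mass A = μ'.mass A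

/-- A (finite) Markov decision process over atomic propositions `AP`. -/
structure MDP (Q : Type u) [Fintype Q] (AP : Type w) where
  init : Q
  trans : Q → Finset (SubProb Q)
  trans_nonempty : ∀ q, (trans q).Nonempty
  label : Q → Set AP

variable {Q : Type u} {Q' : Type v} {AP : Type w} [Fintype Q] [Fintype Q']

/-- A simulation relation on (the state space of) an MDP: a preorder such that related
states have the same labels and every transition of the smaller state is simulated. -/
def IsSimulation (M : MDP Q AP) (R : Q → Q → Prop) : Prop :=
  Reflexive R ∧ Transitive R ∧
    ∀ q q', R q q' → M.label q = M.label q' ∧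
      ∀ μ ∈ M.trans q, ∃ μ' ∈ M.trans q', SubProb.simLE R μ μ'

/-- A bisimulation on (the state space of) an MDP. -/
def IsBisimulation (M : MDP Q AP) (R : Q → Q → Prop) : Prop :=
  Equivalence R ∧
    ∀ q q', R q q' → M.label q = M.label q' ∧
      ∀ μ ∈ M.trans q, ∃ μ' ∈ M.trans q', SubProb.simEq R μ μ'

/-- The direct sum of two MDPs (with the initial state of the first as initial state). -/
def MDP.dsum (M : MDP Q AP) (M' : MDP Q' AP) : MDP (Q ⊕ Q') AP where
  init := Sum.inl M.init
  trans := fun x =>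
    match x with
    | .inl q => (M.trans q).image SubProb.toLeft
    | .inr q => (M'.trans q).image SubProb.toRight
  trans_nonempty := by
    rintro (q | q)
    · exact (M.trans_nonempty q).image _
    · exact (M'.trans_nonempty q).image _
  label := Sum.elim M.label M'.label

/-- `M ≼ M'` : the MDP `M'` simulates the MDP `M`. -/
def MDP.Sim (M : MDP Q AP) (M' : MDP Q' AP) : Prop :=
  ∃ R : (Q ⊕ Q') → (Q ⊕ Q') → Prop,
    IsSimulation (M.dsum M') R ∧ R (Sum.inl M.init) (Sum.inr M'.init)

/-- `M ≈ M'` : the MDPs `M` and `M'` are bisimilar. -/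
def MDP.Bisim (M : MDP Q AP) (M' : MDP Q' AP) : Prop :=
  ∃ R : (Q ⊕ Q') → (Q ⊕ Q') → Prop,
    IsBisimulation (M.dsum M') R ∧ R (Sum.inl M.init) (Sum.inr M'.init)

/-- The canonical-form relation `id_Q ∪ R₁ ∪ id_{Q'}` on a disjoint sum. -/
def canonRel (R₁ : Q → Q' → Prop) : (Q ⊕ Q') → (Q ⊕ Q') → Prop
  | .inl a, .inl b => a = b
  | .inl a, .inr b => R₁ a b
  | .inr _, .inl _ => False
  | .inr a, .inr b => a = b

/-- `R₁ ⊆ Q × Q'` is a canonical simulation of `M` by `M'`. -/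
def IsCanonSim (M : MDP Q AP) (M' : MDP Q' AP) (R₁ : Q → Q' → Prop) : Prop :=
  IsSimulation (M.dsum M') (canonRel R₁)

/-- The edge relation of the unlabeled underlying graph of an MDP. -/
def MDP.edge (M : MDP Q AP) (q₁ q₂ : Q) : Prop :=
  ∃ μ ∈ M.trans q₁, 0 < μ.val q₂

/-- A sub-probability measure on `Q` viewed as a measure on `Q × Fin (k+1)`
concentrated on level `j`. -/
def SubProb.toLevel {k : ℕ} (μ : SubProb Q) (j : Fin (k + 1)) : SubProb (Q × Fin (k + 1)) where
  val := fun x => if x.2 = j then μ.val x.1 else 0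
  nonneg := by
    intro x; (try dsimp only); split
    · exact μ.nonneg x.1
    · exact le_refl 0
  sum_le_one := by
    rw [Fintype.sum_prod_type]
    simpa using μ.sum_le_one

/-- The `k`-th unrolling of an MDP rooted at `q`. States at level `j+1` transition to the
corresponding states at level `j`; states at level `0` have only the zero transition. -/
def MDP.unroll (M : MDP Q AP) (q : Q) (k : ℕ) : MDP (Q × Fin (k + 1)) AP where
  init := (q, Fin.last k)
  trans := fun x =>
    if h : (x.2 : ℕ) = 0 then {SubProb.zero _}
    else (M.trans x.1).image fun μ =>
      μ.toLevel ⟨(x.2 : ℕ) - 1, Nat.lt_of_le_of_lt (Nat.sub_le _ _) x.2.isLt⟩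
  trans_nonempty := by
    intro x; (try dsimp only); split
    · simp
    · exact (M.trans_nonempty x.1).image _
  label := fun x => M.label x.1
mutual
/-- The safety fragment of PCTL. -/
inductive SafeF (AP : Type w) : Type w
  | tt : SafeF AP
  | ff : SafeF AP
  | atom : AP → SafeF AP
  | natom : AP → SafeF AP
  | and : SafeF AP → SafeF AP → SafeF AP
  | or : SafeF AP → SafeF AP → SafeF AP
  | pnextLt : (p : ℚ) → 0 ≤ p → p ≤ 1 → LiveF AP → SafeF AP
  | pnextLe : (p : ℚ) → 0 ≤ p → p ≤ 1 → LiveF AP → SafeF AP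
  | puntilLt : (p : ℚ) → 0 ≤ p → p ≤ 1 → LiveF AP → LiveF AP → SafeF AP
  | puntilLe : (p : ℚ) → 0 ≤ p → p ≤ 1 → LiveF AP → LiveF AP → SafeF AP

/-- The liveness fragment of PCTL. -/
inductive LiveF (AP : Type w) : Type w
  | tt : LiveF AP
  | ff : LiveF AP
  | atom : AP → LiveF AP
  | natom : AP → LiveF AP
  | and : LiveF AP → LiveF AP → LiveF AP
  | or : LiveF AP → LiveF AP → LiveF AP
  | nnextLt : (p : ℚ) → 0 ≤ p → p ≤ 1 → LiveF AP → LiveF AP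
  | nnextLe : (p : ℚ) → 0 ≤ p → p ≤ 1 → LiveF AP → LiveF AP
  | nuntilLt : (p : ℚ) → 0 ≤ p → p ≤ 1 → LiveF AP → LiveF AP → LiveF AP
  | nuntilLe : (p : ℚ) → 0 ≤ p → p ≤ 1 → LiveF AP → LiveF AP → LiveF AP
end

/-- A (history-dependent) scheduler for an MDP. -/
structure Sched (M : MDP Q AP) where
  choice : List Q → Q → SubProb Q
  valid : ∀ h q, choice h q ∈ M.trans q

/-- The probability, under scheduler `σ` with current history `h`, that an until property
`s1 U s2` is satisfied from `q` within `n` steps. -/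
def untilProbN (M : MDP Q AP) (σ : Sched M) (s1 s2 : Set Q) : ℕ → List Q → Q → ℝ
  | 0, _, q => if q ∈ s2 then 1 else 0
  | n + 1, h, q =>
    if q ∈ s2 then 1
    else if q ∈ s1 then
      ∑ q', (σ.choice h q).val q' * untilProbN M σ s1 s2 n (h ++ [q]) q'
    else 0

/-- The probability under scheduler `σ` that `s1 U s2` is satisfied from `q`. -/
def untilProb (M : MDP Q AP) (σ : Sched M) (s1 s2 : Set Q) (q : Q) : ℝ :=
  ⨆ n : ℕ, untilProbN M σ s1 s2 n [] q

mutual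
/-- Satisfaction of safety formulas at a state of an MDP (under all schedulers). -/
def satS (M : MDP Q AP) : SafeF AP → Q → Prop
  | .tt, _ => True
  | .ff, _ => False
  | .atom a, q => a ∈ M.label q
  | .natom a, q => a ∉ M.label q
  | .and φ ψ, q => satS M φ q ∧ satS M ψ q
  | .or φ ψ, q => satS M φ q ∨ satS M ψ q
  | .pnextLt p _ _ ψ, q => ∀ μ ∈ M.trans q, μ.mass {q' | satL M ψ q'} < (p : ℝ)
  | .pnextLe p _ _ ψ, q => ∀ μ ∈ M.trans q, μ.mass {q' | satL M ψ q'} ≤ (p : ℝ)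
  | .puntilLt p _ _ ψ1 ψ2, q =>
    ∀ σ : Sched M, untilProb M σ {q' | satL M ψ1 q'} {q' | satL M ψ2 q'} q < (p : ℝ)
  | .puntilLe p _ _ ψ1 ψ2, q =>
    ∀ σ : Sched M, untilProb M σ {q' | satL M ψ1 q'} {q' | satL M ψ2 q'} q ≤ (p : ℝ)

/-- Satisfaction of liveness formulas at a state of an MDP. -/
def satL (M : MDP Q AP) : LiveF AP → Q → Prop
  | .tt, _ => True
  | .ff, _ => False
  | .atom a, q => a ∈ M.label q
  | .natom a, q => a ∉ M.label q
  | .and φ ψ, q => satL M φ q ∧ satL M ψ q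
  | .or φ ψ, q => satL M φ q ∨ satL M ψ q
  | .nnextLt p _ _ ψ, q => ¬ ∀ μ ∈ M.trans q, μ.mass {q' | satL M ψ q'} < (p : ℝ)
  | .nnextLe p _ _ ψ, q => ¬ ∀ μ ∈ M.trans q, μ.mass {q' | satL M ψ q'} ≤ (p : ℝ)
  | .nuntilLt p _ _ ψ1 ψ2, q =>
    ¬ ∀ σ : Sched M, untilProb M σ {q' | satL M ψ1 q'} {q' | satL M ψ2 q'} q < (p : ℝ)
  | .nuntilLe p _ _ ψ1 ψ2, q =>
    ¬ ∀ σ : Sched M, untilProb M σ {q' | satL M ψ1 q'} {q' | satL M ψ2 q'} q ≤ (p : ℝ)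
end
mutual
/-- Weak safety formulas: safety formulas using only `≤` probability bounds. -/
def SafeF.weak : SafeF AP → Prop
  | .tt => True
  | .ff => True
  | .atom _ => True
  | .natom _ => True
  | .and φ ψ => φ.weak ∧ ψ.weak
  | .or φ ψ => φ.weak ∧ ψ.weak
  | .pnextLt _ _ _ _ => False
  | .pnextLe _ _ _ ψ => ψ.strict
  | .puntilLt _ _ _ _ _ => False
  | .puntilLe _ _ _ ψ1 ψ2 => ψ1.strict ∧ ψ2.strict

/-- Strict liveness formulas: liveness formulas using only `≤` probability bounds. -/
def LiveF.strict : LiveF AP → Prop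
  | .tt => True
  | .ff => True
  | .atom _ => True
  | .natom _ => True
  | .and φ ψ => φ.strict ∧ ψ.strict
  | .or φ ψ => φ.strict ∧ ψ.strict
  | .nnextLt _ _ _ _ => False
  | .nnextLe _ _ _ ψ => ψ.strict
  | .nuntilLt _ _ _ _ _ => False
  | .nuntilLe _ _ _ ψ1 ψ2 => ψ1.strict ∧ ψ2.strict
end

/-- An equivalence relation is compatible with an MDP if related states have equal labels. -/
def Compatible (M : MDP Q AP) (s : Setoid Q) : Prop :=
  ∀ q q', s.r q q' → M.label q = M.label q'

/-- The lifting of a sub-probability measure to the quotient: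
`[μ]([q]) = μ([q])`. -/
def SubProb.lift (s : Setoid Q) (μ : SubProb Q) : SubProb (Quotient s) where
  val := fun a => ∑ q, if Quotient.mk s q = a then μ.val q else 0
  nonneg := by
    intro a
    apply Finset.sum_nonneg
    intro q _
    split
    · exact μ.nonneg q
    · exact le_refl 0
  sum_le_one := by
    rw [Finset.sum_comm]
    simpa using μ.sum_le_one

/-- The abstract MDP of `M` with respect to an equivalence relation `s`. -/
def MDP.abst (M : MDP Q AP) (s : Setoid Q) : MDP (Quotient s) AP where
  init := Quotient.mk s M.init
  trans := fun a =>
    Finset.univ.biUnion fun q =>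
      if Quotient.mk s q = a then (M.trans q).image (SubProb.lift s) else ∅
  trans_nonempty := by
    intro a
    obtain ⟨q, rfl⟩ := Quotient.exists_rep a
    obtain ⟨μ, hμ⟩ := M.trans_nonempty q
    refine ⟨SubProb.lift s μ, Finset.mem_biUnion.2 ⟨q, Finset.mem_univ q, ?_⟩⟩
    rw [if_pos rfl]
    exact Finset.mem_image_of_mem _ hμ
  label := fun a => M.label a.out

/-- The abstraction relation `{(q, [q])}`. -/
def abstRel (s : Setoid Q) : Q → Quotient s → Prop := fun q a => Quotient.mk s q = a

/-- The refinement relation for `s' ⊆ s`: `[q]_{s'}` is related to `[q]_s` iff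
`[q]_{s'} ⊆ [q]_s`, equivalently they share a common element. -/
def refineRel (s' s : Setoid Q) : Quotient s' → Quotient s → Prop := fun a' a =>
  ∃ q : Q, Quotient.mk s' q = a' ∧ Quotient.mk s q = a

/-- `(E, R)` is a counterexample for the MDP `A` and safety formula `ψ`. -/
def IsCex {QA : Type v} [Fintype QA] (A : MDP QA AP) (ψ : SafeF AP) (E : MDP Q AP)
    (R : Q → QA → Prop) : Prop :=
  ¬ satS E ψ E.init ∧ IsCanonSim E A R

/-- Containment of MDPs (on a common state space): same initial state, same labels, and
each transition set injects into the corresponding one so that each transition agrees with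
its image except possibly being zero. -/
def MDPContained (M' M : MDP Q AP) : Prop :=
  M'.init = M.init ∧ (∀ q, M'.label q = M.label q) ∧
    ∀ q, ∃ f : SubProb Q → SubProb Q, Set.InjOn f (M'.trans q) ∧
      ∀ μ' ∈ M'.trans q, f μ' ∈ M.trans q ∧ ∀ q'', μ'.val q'' = (f μ').val q'' ∨ μ'.val q'' = 0

/-- A minimal counterexample. -/
def MinimalCex {QA : Type v} [Fintype QA] (A : MDP QA AP) (ψ : SafeF AP) (E : MDP Q AP)
    (R₀ : Q → QA → Prop) : Prop :=
  IsCex A ψ E R₀ ∧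
    (∀ (E₁ : MDP Q AP) (R₁ : Q → QA → Prop),
      IsCex A ψ E₁ R₁ → MDPContained E₁ E → E₁ = E) ∧
    (∀ R₁ : Q → QA → Prop,
      IsCex A ψ E R₁ → (∀ e a, R₁ e a → R₀ e a) → R₁ = R₀)

/-- The counterexample `(E, R₀)` for the abstraction `M/s` is valid and consistent with
`(M, s)`: there is a canonical (validating) simulation `R` of `E` by `M` with `α∘R ⊆ R₀`. -/
def ValidConsistent (M : MDP Q AP) (s : Setoid Q) {QE : Type v} [Fintype QE] (E : MDP QE AP)
    (R₀ : QE → Quotient s → Prop) : Prop :=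
  ∃ R : QE → Q → Prop, IsCanonSim E M R ∧ ∀ e q, R e q → R₀ e (Quotient.mk s q)

/-- The underlying graph of an MDP is a tree rooted at `r`. -/
def IsTreeGraph {V : Type u} (E : V → V → Prop) (r : V) : Prop :=
  (∀ q, ¬ E q r) ∧ (∀ q, q ≠ r → ∃! p, E p q) ∧ ∀ q, Relation.ReflTransGen E r q

section Dev

variable {Q : Type u} [Fintype Q] {AP : Type w}

namespace SubProb

theorem mass_eq_sum_ite (μ : SubProb Q) (A : Set Q) :
    μ.mass A = ∑ q, if q ∈ A then μ.val q else 0 := by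
  simp [mass, Set.indicator_apply]

theorem mass_nonneg (μ : SubProb Q) (A : Set Q) : 0 ≤ μ.mass A := by
  rw [mass_eq_sum_ite]
  apply Finset.sum_nonneg
  intro q _
  split
  · exact μ.nonneg q
  · exact le_refl 0

theorem mass_mono (μ : SubProb Q) {A B : Set Q} (h : A ⊆ B) : μ.mass A ≤ μ.mass B := by
  rw [mass_eq_sum_ite, mass_eq_sum_ite]
  apply Finset.sum_le_sum
  intro q _
  by_cases hq : q ∈ A
  · rw [if_pos hq, if_pos (h hq)]
  · rw [if_neg hq]
    split
    · exact μ.nonneg q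
    · exact le_refl 0

end SubProb

/-- Sum comparison via a (dependent, injective-on-support) embedding. -/
theorem sum_le_of_inj {α : Type*} {β : Type*} [Fintype α] [Fintype β]
    (f : α → ℝ) (g : β → ℝ) (hg : ∀ b, 0 ≤ g b)
    (e : ∀ a, f a ≠ 0 → β)
    (inj : ∀ a ha a' ha', e a ha = e a' ha' → a = a')
    (hfg : ∀ a ha, f a ≤ g (e a ha)) :
    ∑ a, f a ≤ ∑ b, g b := by
  classical
  set s : Finset α := Finset.univ.filter (fun a => f a ≠ 0) with hs
  have h1 : ∑ a, f a = ∑ a ∈ s, f a := by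
    rw [hs, Finset.sum_filter_ne_zero]
  have hmem : ∀ x : {a // a ∈ s}, f x.1 ≠ 0 := by
    intro x
    exact (Finset.mem_filter.mp x.2).2
  have h2 : ∑ a ∈ s, f a = ∑ x ∈ s.attach, f x.1 := (Finset.sum_attach s f).symm
  have h3 : ∑ x ∈ s.attach, f x.1 ≤ ∑ x ∈ s.attach, g (e x.1 (hmem x)) := by
    apply Finset.sum_le_sum
    intro x _
    exact hfg x.1 (hmem x)
  have h4 : ∑ x ∈ s.attach, g (e x.1 (hmem x)) = ∑ b ∈ s.attach.image (fun x => e x.1 (hmem x)), g b := by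
    rw [Finset.sum_image]
    intro x _ y _ hxy
    exact Subtype.ext (inj _ _ _ _ hxy)
  have h5 : ∑ b ∈ s.attach.image (fun x => e x.1 (hmem x)), g b ≤ ∑ b, g b := by
    apply Finset.sum_le_sum_of_subset_of_nonneg (Finset.subset_univ _)
    intro b _ _
    exact hg b
  calc ∑ a, f a = ∑ x ∈ s.attach, f x.1 := by rw [h1, h2]
    _ ≤ _ := h3
    _ = _ := h4
    _ ≤ _ := h5

end Dev
section Dev2

variable {Q : Type u} [Fintype Q] {AP : Type w}

/-- Depth-indexed until-probability, where the target/constraint sets may depend on the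
remaining depth. -/
def uB (M : MDP Q AP) (σ : Sched M) (s1 s2 : ℕ → Q → Prop) : ℕ → List Q → Q → ℝ
  | 0, _, q => if s2 0 q then 1 else 0
  | n + 1, h, q =>
    if s2 (n + 1) q then 1
    else if s1 (n + 1) q then
      ∑ q', (σ.choice h q).val q' * uB M σ s1 s2 n (h ++ [q]) q'
    else 0

theorem uB_nonneg (M : MDP Q AP) (σ : Sched M) (s1 s2 : ℕ → Q → Prop) :
    ∀ n h q, 0 ≤ uB M σ s1 s2 n h q
  | 0, h, q => by
    rw [uB]; split
    · exact zero_le_one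
    · exact le_refl 0
  | n + 1, h, q => by
    rw [uB]
    split
    · exact zero_le_one
    split
    · apply Finset.sum_nonneg
      intro q' _
      exact mul_nonneg ((σ.choice h q).nonneg q') (uB_nonneg M σ s1 s2 n _ q')
    · exact le_refl 0

theorem uB_le_one (M : MDP Q AP) (σ : Sched M) (s1 s2 : ℕ → Q → Prop) :
    ∀ n h q, uB M σ s1 s2 n h q ≤ 1
  | 0, h, q => by
    rw [uB]; split
    · exact le_refl 1
    · exact zero_le_one
  | n + 1, h, q => by
    rw [uB]
    split
    · exact le_refl 1
    split
    · calc ∑ q', (σ.choice h q).val q' * uB M σ s1 s2 n (h ++ [q]) q'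
          ≤ ∑ q', (σ.choice h q).val q' := by
            apply Finset.sum_le_sum
            intro q' _
            calc (σ.choice h q).val q' * uB M σ s1 s2 n (h ++ [q]) q'
                ≤ (σ.choice h q).val q' * 1 :=
                  mul_le_mul_of_nonneg_left (uB_le_one M σ s1 s2 n _ q')
                    ((σ.choice h q).nonneg q')
              _ = (σ.choice h q).val q' := mul_one _
        _ ≤ 1 := (σ.choice h q).sum_le_one
    · exact zero_le_one

theorem uB_of_s2 (M : MDP Q AP) (σ : Sched M) (s1 s2 : ℕ → Q → Prop) (n : ℕ) (h : List Q)
    (q : Q) (hq : s2 n q) : uB M σ s1 s2 n h q = 1 := by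
  cases n with
  | zero => rw [uB, if_pos hq]
  | succ n => rw [uB, if_pos hq]

theorem uB_mono (M : MDP Q AP) (σ : Sched M) (s1 s2 : ℕ → Q → Prop)
    (hs1 : ∀ m m' q, m ≤ m' → s1 m q → s1 m' q)
    (hs2 : ∀ m m' q, m ≤ m' → s2 m q → s2 m' q) :
    ∀ n n' h q, n ≤ n' → uB M σ s1 s2 n h q ≤ uB M σ s1 s2 n' h q := by
  have key : ∀ n h q, uB M σ s1 s2 n h q ≤ uB M σ s1 s2 (n + 1) h q := by
    intro n
    induction n with
    | zero =>
      intro h q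
      rw [uB]
      split
      · rename_i hq
        rw [uB_of_s2 M σ s1 s2 1 h q (hs2 0 1 q (by omega) hq)]
      · exact uB_nonneg M σ s1 s2 1 h q
    | succ n ih =>
      intro h q
      by_cases h2 : s2 (n + 2) q
      · rw [uB_of_s2 M σ s1 s2 (n + 2) h q h2]
        exact uB_le_one M σ s1 s2 (n + 1) h q
      · have h2' : ¬ s2 (n + 1) q := fun hc => h2 (hs2 (n + 1) (n + 2) q (by omega) hc)
        conv_lhs => rw [uB]
        rw [if_neg h2']
        split
        · rename_i h1
          rw [uB, if_neg h2, if_pos (hs1 (n + 1) (n + 2) q (by omega) h1)]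
          apply Finset.sum_le_sum
          intro q' _
          exact mul_le_mul_of_nonneg_left (ih _ q') ((σ.choice h q).nonneg q')
        · exact uB_nonneg M σ s1 s2 (n + 2) h q
  intro n n' h q hle
  induction hle with
  | refl => exact le_refl _
  | step h' ih => exact le_trans ih (key _ h q)

theorem untilProbN_nonneg (M : MDP Q AP) (σ : Sched M) (s1 s2 : Set Q) :
    ∀ n h q, 0 ≤ untilProbN M σ s1 s2 n h q
  | 0, h, q => by
    rw [untilProbN]; split
    · exact zero_le_one
    · exact le_refl 0
  | n + 1, h, q => by
    rw [untilProbN]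
    split
    · exact zero_le_one
    split
    · apply Finset.sum_nonneg
      intro q' _
      exact mul_nonneg ((σ.choice h q).nonneg q') (untilProbN_nonneg M σ s1 s2 n _ q')
    · exact le_refl 0

theorem untilProbN_le_one (M : MDP Q AP) (σ : Sched M) (s1 s2 : Set Q) :
    ∀ n h q, untilProbN M σ s1 s2 n h q ≤ 1
  | 0, h, q => by
    rw [untilProbN]; split
    · exact le_refl 1
    · exact zero_le_one
  | n + 1, h, q => by
    rw [untilProbN]
    split
    · exact le_refl 1
    split
    · calc ∑ q', (σ.choice h q).val q' * untilProbN M σ s1 s2 n (h ++ [q]) q'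
          ≤ ∑ q', (σ.choice h q).val q' := by
            apply Finset.sum_le_sum
            intro q' _
            calc (σ.choice h q).val q' * untilProbN M σ s1 s2 n (h ++ [q]) q'
                ≤ (σ.choice h q).val q' * 1 :=
                  mul_le_mul_of_nonneg_left (untilProbN_le_one M σ s1 s2 n _ q')
                    ((σ.choice h q).nonneg q')
              _ = (σ.choice h q).val q' := mul_one _
        _ ≤ 1 := (σ.choice h q).sum_le_one
    · exact zero_le_one

theorem untilProb_le_iff (M : MDP Q AP) (σ : Sched M) (s1 s2 : Set Q) (q : Q) (c : ℝ)
    (hc : 0 ≤ c) : untilProb M σ s1 s2 q ≤ c ↔ ∀ n, untilProbN M σ s1 s2 n [] q ≤ c := by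
  constructor
  · intro h n
    refine le_trans ?_ h
    apply le_ciSup (f := fun n => untilProbN M σ s1 s2 n [] q)
    exact ⟨1, by rintro x ⟨n, rfl⟩; exact untilProbN_le_one M σ s1 s2 n [] q⟩
  · intro h
    exact ciSup_le h

end Dev2
section Dev3

variable {Q : Type u} [Fintype Q] {AP : Type w}

/-- Depth-bounded satisfaction of liveness formulas. -/
def satLN (M : MDP Q AP) : LiveF AP → ℕ → Q → Prop
  | .tt, _, _ => True
  | .ff, _, _ => False
  | .atom a, _, q => a ∈ M.label q
  | .natom a, _, q => a ∉ M.label q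
  | .and φ ψ, n, q => satLN M φ n q ∧ satLN M ψ n q
  | .or φ ψ, n, q => satLN M φ n q ∨ satLN M ψ n q
  | .nnextLt _ _ _ _, _, _ => False
  | .nnextLe p _ _ ψ, n, q =>
      ∃ m, m + 1 ≤ n ∧ ∃ μ ∈ M.trans q, (p : ℝ) < μ.mass {q' | satLN M ψ m q'}
  | .nuntilLt _ _ _ _ _, _, _ => False
  | .nuntilLe p _ _ ψ1 ψ2, n, q =>
      ∃ σ : Sched M, (p : ℝ) < uB M σ (satLN M ψ1) (satLN M ψ2) n [] q

theorem satLN_mono (M : MDP Q AP) :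
    ∀ (ψ : LiveF AP) (n n' : ℕ), n ≤ n' → ∀ q, satLN M ψ n q → satLN M ψ n' q
  | .tt, _, _, _, _, h => h
  | .ff, _, _, _, _, h => h
  | .atom a, _, _, _, _, h => h
  | .natom a, _, _, _, _, h => h
  | .and φ ψ, n, n', hle, q, h =>
      ⟨satLN_mono M φ n n' hle q h.1, satLN_mono M ψ n n' hle q h.2⟩
  | .or φ ψ, n, n', hle, q, h =>
      h.elim (fun h => Or.inl (satLN_mono M φ n n' hle q h))
        (fun h => Or.inr (satLN_mono M ψ n n' hle q h))
  | .nnextLt _ _ _ _, _, _, _, _, h => h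
  | .nnextLe p _ _ ψ, n, n', hle, q, h => by
      obtain ⟨m, hm, μ, hμ, hlt⟩ := h
      exact ⟨m, by omega, μ, hμ, hlt⟩
  | .nuntilLt _ _ _ _ _, _, _, _, _, h => h
  | .nuntilLe p _ _ ψ1 ψ2, n, n', hle, q, h => by
      obtain ⟨σ, hσ⟩ := h
      refine ⟨σ, lt_of_lt_of_le hσ ?_⟩
      exact uB_mono M σ _ _ (fun m m' q hle => satLN_mono M ψ1 m m' hle q)
        (fun m m' q hle => satLN_mono M ψ2 m m' hle q) n n' [] q hle

/-- Turn a pointwise bound into a uniform bound over a finite state space. -/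
theorem uniform_bound {P : Q → Prop} {R : ℕ → Q → Prop}
    (hmono : ∀ n n' q, n ≤ n' → R n q → R n' q)
    (h : ∀ q, P q → ∃ n, R n q) : ∃ n, ∀ q, P q → R n q := by
  classical
  refine ⟨Finset.univ.sup (fun q => if hq : P q then (h q hq).choose else 0), ?_⟩
  intro q hq
  have h1 : R (if hq' : P q then (h q hq').choose else 0) q := by
    rw [dif_pos hq]
    exact (h q hq).choose_spec
  exact hmono _ _ q (Finset.le_sup (Finset.mem_univ q)) h1

theorem untilProbN_le_uB (M : MDP Q AP) (σ : Sched M) (ψ1 ψ2 : LiveF AP) (n₀ : ℕ)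
    (h1 : ∀ q, satL M ψ1 q → satLN M ψ1 n₀ q) (h2 : ∀ q, satL M ψ2 q → satLN M ψ2 n₀ q) :
    ∀ (m : ℕ) (h : List Q) (q : Q),
      untilProbN M σ {q' | satL M ψ1 q'} {q' | satL M ψ2 q'} m h q ≤
        uB M σ (satLN M ψ1) (satLN M ψ2) (m + n₀) h q := by
  intro m
  induction m with
  | zero =>
    intro h q
    rw [untilProbN]
    split
    · rename_i hq
      rw [uB_of_s2 M σ _ _ (0 + n₀) h q
        (satLN_mono M ψ2 n₀ (0 + n₀) (by omega) q (h2 q hq))]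
    · exact uB_nonneg M σ _ _ _ h q
  | succ m ih =>
    intro h q
    by_cases hs2 : satLN M ψ2 (m + 1 + n₀) q
    · rw [uB_of_s2 M σ _ _ (m + 1 + n₀) h q hs2]
      exact untilProbN_le_one M σ _ _ (m + 1) h q
    · have hq2 : q ∉ {q' | satL M ψ2 q'} := by
        intro hc
        exact hs2 (satLN_mono M ψ2 n₀ (m + 1 + n₀) (by omega) q (h2 q hc))
      rw [untilProbN, if_neg hq2]
      split
      · rename_i hq1
        have hs1 : satLN M ψ1 (m + 1 + n₀) q :=
          satLN_mono M ψ1 n₀ (m + 1 + n₀) (by omega) q (h1 q hq1)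
        have heq : m + 1 + n₀ = (m + n₀) + 1 := by omega
        rw [heq, uB, if_neg (by rw [← heq]; exact hs2), if_pos (by rw [← heq]; exact hs1)]
        apply Finset.sum_le_sum
        intro q' _
        exact mul_le_mul_of_nonneg_left (ih _ q') ((σ.choice h q).nonneg q')
      · exact uB_nonneg M σ _ _ _ h q

/-- If a strict liveness formula holds at a state, it holds with some uniform finite depth
bound. -/
theorem satL_satLN (M : MDP Q AP) :
    ∀ ψ : LiveF AP, ψ.strict → ∃ n, ∀ q, satL M ψ q → satLN M ψ n q
  | .tt, _ => ⟨0, fun q _ => trivial⟩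
  | .ff, _ => ⟨0, fun q h => by rw [satL] at h; exact h⟩
  | .atom a, _ => ⟨0, fun q h => by rw [satL] at h; exact h⟩
  | .natom a, _ => ⟨0, fun q h => by rw [satL] at h; exact h⟩
  | .and φ ψ, hstrict => by
      rw [LiveF.strict] at hstrict
      obtain ⟨n₁, hn₁⟩ := satL_satLN M φ hstrict.1
      obtain ⟨n₂, hn₂⟩ := satL_satLN M ψ hstrict.2
      refine ⟨max n₁ n₂, fun q h => ?_⟩
      rw [satL] at h
      exact ⟨satLN_mono M φ n₁ _ (le_max_left _ _) q (hn₁ q h.1),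
        satLN_mono M ψ n₂ _ (le_max_right _ _) q (hn₂ q h.2)⟩
  | .or φ ψ, hstrict => by
      rw [LiveF.strict] at hstrict
      obtain ⟨n₁, hn₁⟩ := satL_satLN M φ hstrict.1
      obtain ⟨n₂, hn₂⟩ := satL_satLN M ψ hstrict.2
      refine ⟨max n₁ n₂, fun q h => ?_⟩
      rw [satL] at h
      exact h.elim
        (fun h => Or.inl (satLN_mono M φ n₁ _ (le_max_left _ _) q (hn₁ q h)))
        (fun h => Or.inr (satLN_mono M ψ n₂ _ (le_max_right _ _) q (hn₂ q h)))
  | .nnextLt p _ _ ψ, hstrict => by rw [LiveF.strict] at hstrict; exact hstrict.elim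
  | .nnextLe p _ _ ψ, hstrict => by
      rw [LiveF.strict] at hstrict
      obtain ⟨n₀, hn₀⟩ := satL_satLN M ψ hstrict
      refine ⟨n₀ + 1, fun q h => ?_⟩
      rw [satL] at h
      push_neg at h
      obtain ⟨μ, hμ, hlt⟩ := h
      refine ⟨n₀, le_refl _, μ, hμ, lt_of_lt_of_le hlt ?_⟩
      exact μ.mass_mono (fun q' hq' => hn₀ q' hq')
  | .nuntilLt p _ _ ψ1 ψ2, hstrict => by rw [LiveF.strict] at hstrict; exact hstrict.elim
  | .nuntilLe p h0 _ ψ1 ψ2, hstrict => by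
      rw [LiveF.strict] at hstrict
      obtain ⟨n₁, hn₁⟩ := satL_satLN M ψ1 hstrict.1
      obtain ⟨n₂, hn₂⟩ := satL_satLN M ψ2 hstrict.2
      apply uniform_bound (fun n n' q hle => satLN_mono M (.nuntilLe p _ _ ψ1 ψ2) n n' hle q)
      intro q h
      rw [satL] at h
      push_neg at h
      obtain ⟨σ, hσ⟩ := h
      have hex : ∃ m, (p : ℝ) <
          untilProbN M σ {q' | satL M ψ1 q'} {q' | satL M ψ2 q'} m [] q := by
        by_contra hc
        push_neg at hc
        exact absurd ((untilProb_le_iff M σ _ _ q p (by exact_mod_cast h0)).2 hc)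
          (not_le.mpr hσ)
      obtain ⟨m, hm⟩ := hex
      set n₀ := max n₁ n₂ with hn₀
      refine ⟨m + n₀, σ, lt_of_lt_of_le hm ?_⟩
      exact untilProbN_le_uB M σ ψ1 ψ2 n₀
        (fun q hq => satLN_mono M ψ1 n₁ n₀ (le_max_left _ _) q (hn₁ q hq))
        (fun q hq => satLN_mono M ψ2 n₂ n₀ (le_max_right _ _) q (hn₂ q hq)) m [] q

end Dev3
section Dev4

variable {Q : Type u} [Fintype Q] {AP : Type w}

/-- Generic transfer: if `N` "layer-covers" `M` via `st`/`lvl`, then depth-`n` bounded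
satisfaction in `M` transfers to genuine satisfaction in `N` at states of level `≥ n`. -/
theorem satLN_transfer (M : MDP Q AP) {QN : Type v} [Fintype QN] (N : MDP QN AP)
    (st : QN → Q) (lvl : QN → ℕ)
    (hlab : ∀ x, N.label x = M.label (st x))
    (hstep : ∀ x, 1 ≤ lvl x → ∀ μ ∈ M.trans (st x), ∃ ν ∈ N.trans x,
      ∀ q', μ.val q' ≠ 0 → ∃ y, st y = q' ∧ lvl y + 1 = lvl x ∧ μ.val q' ≤ ν.val y) :
    ∀ (ψ : LiveF AP) (n : ℕ) (x : QN), satLN M ψ n (st x) → n ≤ lvl x → satL N ψ x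
  | .tt, n, x, h, hn => by rw [satL]; trivial
  | .ff, n, x, h, hn => h.elim
  | .atom a, n, x, h, hn => by rw [satL, hlab]; exact h
  | .natom a, n, x, h, hn => by rw [satL, hlab]; exact h
  | .and φ ψ, n, x, h, hn => by
      rw [satL]
      exact ⟨satLN_transfer M N st lvl hlab hstep φ n x h.1 hn,
        satLN_transfer M N st lvl hlab hstep ψ n x h.2 hn⟩
  | .or φ ψ, n, x, h, hn => by
      rw [satL]
      exact h.elim (fun h => Or.inl (satLN_transfer M N st lvl hlab hstep φ n x h hn))
        (fun h => Or.inr (satLN_transfer M N st lvl hlab hstep ψ n x h hn))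
  | .nnextLt _ _ _ _, n, x, h, hn => h.elim
  | .nuntilLt _ _ _ _ _, n, x, h, hn => h.elim
  | .nnextLe p h0 h1 ψ, n, x, h, hn => by
      obtain ⟨m, hm, μ, hμ, hlt⟩ := h
      have hx1 : 1 ≤ lvl x := by omega
      obtain ⟨ν, hν, hc⟩ := hstep x hx1 μ hμ
      rw [satL]
      intro hall
      have hle : μ.mass {q' | satLN M ψ m q'} ≤ ν.mass {y | satL N ψ y} := by
        rw [SubProb.mass_eq_sum_ite, SubProb.mass_eq_sum_ite]
        have hne : ∀ q', (if q' ∈ {q' | satLN M ψ m q'} then μ.val q' else 0) ≠ 0 →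
            μ.val q' ≠ 0 ∧ satLN M ψ m q' := by
          intro q' hq'
          by_cases hin : q' ∈ {q' | satLN M ψ m q'}
          · rw [if_pos hin] at hq'; exact ⟨hq', hin⟩
          · rw [if_neg hin] at hq'; exact absurd rfl hq'
        apply sum_le_of_inj _ _ ?hg (fun q' hq' => (hc q' (hne q' hq').1).choose) ?inj ?hfg
        case hg =>
          intro y; split
          · exact ν.nonneg y
          · exact le_refl 0
        case inj =>
          intro a ha a' ha' he
          have s1 := (hc a (hne a ha).1).choose_spec
          have s2 := (hc a' (hne a' ha').1).choose_spec
          rw [← s1.1, ← s2.1]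
          exact congrArg st he
        case hfg =>
          intro q' hq'
          have s1 := (hc q' (hne q' hq').1).choose_spec
          have hsat : satL N ψ (hc q' (hne q' hq').1).choose := by
            apply satLN_transfer M N st lvl hlab hstep ψ m _ _ ?_
            · rw [s1.1]
              exact (hne q' hq').2
            · omega
          have goal' : (if q' ∈ {q' | satLN M ψ m q'} then μ.val q' else 0) ≤
              (if (hc q' (hne q' hq').1).choose ∈ {y | satL N ψ y} then
                ν.val ((hc q' (hne q' hq').1).choose) else 0) := by
            rw [if_pos (show q' ∈ {q' | satLN M ψ m q'} from (hne q' hq').2),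
              if_pos (show (hc q' (hne q' hq').1).choose ∈ {y | satL N ψ y} from hsat)]
            exact s1.2.2
          exact goal'
      exact absurd (lt_of_lt_of_le hlt hle) (not_lt.mpr (hall ν hν))
  | .nuntilLe p h0 h1 ψ1 ψ2, n, x, h, hn => by
      obtain ⟨σ, hσ⟩ := h
      -- build the matching scheduler on `N`
      let σN : Sched N :=
        { choice := fun hist y =>
            if hy : 1 ≤ lvl y then
              (hstep y hy (σ.choice (hist.map st) (st y))
                (σ.valid (hist.map st) (st y))).choose
            else (N.trans_nonempty y).choose
          valid := by
            intro hist y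
            split
            · rename_i hy
              exact (hstep y hy (σ.choice (hist.map st) (st y))
                (σ.valid (hist.map st) (st y))).choose_spec.1
            · exact (N.trans_nonempty y).choose_spec }
      have claim : ∀ (m : ℕ) (y : QN) (hist : List QN), m ≤ lvl y →
          uB M σ (satLN M ψ1) (satLN M ψ2) m (hist.map st) (st y) ≤
            untilProbN N σN {y' | satL N ψ1 y'} {y' | satL N ψ2 y'} m hist y := by
        intro m
        induction m with
        | zero =>
          intro y hist hy
          rw [uB, untilProbN]
          by_cases hs2 : satLN M ψ2 0 (st y)
          · rw [if_pos hs2, if_pos (show y ∈ {y' | satL N ψ2 y'} from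
              satLN_transfer M N st lvl hlab hstep ψ2 0 y hs2 (by omega))]
          · rw [if_neg hs2]
            split
            · exact zero_le_one
            · exact le_refl 0
        | succ m ih =>
          intro y hist hy
          by_cases hy2 : satL N ψ2 y
          · rw [untilProbN, if_pos (show y ∈ {y' | satL N ψ2 y'} from hy2)]
            exact uB_le_one M σ _ _ (m + 1) _ _
          · have hls2 : ¬ satLN M ψ2 (m + 1) (st y) := fun hc =>
              hy2 (satLN_transfer M N st lvl hlab hstep ψ2 (m + 1) y hc hy)
            rw [uB, if_neg hls2]
            by_cases hs1 : satLN M ψ1 (m + 1) (st y)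
            · rw [if_pos hs1, untilProbN, if_neg (show y ∉ {y' | satL N ψ2 y'} from hy2),
                if_pos (show y ∈ {y' | satL N ψ1 y'} from
                  satLN_transfer M N st lvl hlab hstep ψ1 (m + 1) y hs1 hy)]
              have hy1 : 1 ≤ lvl y := by omega
              have hch : σN.choice hist y =
                  (hstep y hy1 (σ.choice (hist.map st) (st y))
                    (σ.valid (hist.map st) (st y))).choose := by
                show (if hy : 1 ≤ lvl y then _ else _) = _
                rw [dif_pos hy1]
              set μ := σ.choice (hist.map st) (st y) with hμdef
              set ν := (hstep y hy1 μ (σ.valid (hist.map st) (st y))).choose with hνdef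
              have hspec := (hstep y hy1 μ (σ.valid (hist.map st) (st y))).choose_spec
              rw [hch]
              have hmap : (hist ++ [y]).map st = hist.map st ++ [st y] := by simp
              apply sum_le_of_inj _ _ ?hg
                (fun q' hq' => (hspec.2 q'
                  (fun hc => hq' (by rw [hc, zero_mul]))).choose) ?inj ?hfg
              case hg =>
                intro y'
                exact mul_nonneg (ν.nonneg y') (untilProbN_nonneg N σN _ _ m _ y')
              case inj =>
                intro a ha a' ha' he
                have s1 := (hspec.2 a (fun hc => ha (by rw [hc, zero_mul]))).choose_spec
                have s2 := (hspec.2 a' (fun hc => ha' (by rw [hc, zero_mul]))).choose_spec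
                rw [← s1.1, ← s2.1]
                exact congrArg st he
              case hfg =>
                intro q' hq'
                have hne : μ.val q' ≠ 0 := fun hc => hq' (by rw [hc, zero_mul])
                have s1 := (hspec.2 q' hne).choose_spec
                have hIH := ih (hspec.2 q' hne).choose (hist ++ [y]) (by omega)
                rw [hmap, s1.1] at hIH
                have goal' : μ.val q' * uB M σ (satLN M ψ1) (satLN M ψ2) m
                      (hist.map st ++ [st y]) q' ≤
                    ν.val ((hspec.2 q' hne).choose) *
                      untilProbN N σN {y' | satL N ψ1 y'} {y' | satL N ψ2 y'} m
                        (hist ++ [y]) ((hspec.2 q' hne).choose) :=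
                  mul_le_mul s1.2.2 hIH (uB_nonneg M σ _ _ m _ _) (ν.nonneg _)
                exact goal'
            · rw [if_neg hs1]
              exact untilProbN_nonneg N σN _ _ (m + 1) hist y
      rw [satL]
      intro hall
      have h2 := (untilProb_le_iff N σN _ _ x (p : ℝ) (by exact_mod_cast h0)).1 (hall σN) n
      have h3 := claim n x [] hn
      rw [List.map_nil] at h3
      exact absurd (lt_of_lt_of_le hσ (le_trans h3 h2)) (not_lt.mpr (le_refl _))
end Dev4
section Dev5

variable {Q : Type u} [Fintype Q] {AP : Type w}

theorem part_a (M : MDP Q AP) (ψ : LiveF AP) (hstrict : ψ.strict) (q : Q)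
    (h : satL M ψ q) : ∃ k, satL (M.unroll q k) ψ (M.unroll q k).init := by
  obtain ⟨n, hn⟩ := satL_satLN M ψ hstrict
  refine ⟨n, ?_⟩
  have key := satLN_transfer M (M.unroll q n) (fun x => x.1) (fun x => (x.2 : ℕ))
    (fun x => rfl) ?hstep ψ n (q, Fin.last n) (hn q h) ?hle
  case hle => simp
  case hstep =>
    intro x hx μ hμ
    have hx1 : 1 ≤ (x.2 : ℕ) := hx
    have hlt : (x.2 : ℕ) < n + 1 := x.2.isLt
    refine ⟨μ.toLevel ⟨(x.2 : ℕ) - 1, by omega⟩, ?_, ?_⟩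
    · show μ.toLevel _ ∈ (M.unroll q n).trans x
      simp only [MDP.unroll]
      rw [dif_neg (by omega : ¬ (x.2 : ℕ) = 0)]
      exact Finset.mem_image_of_mem _ hμ
    · intro q' hq'
      refine ⟨(q', ⟨(x.2 : ℕ) - 1, by omega⟩), rfl, ?_, ?_⟩
      · show ((⟨(x.2 : ℕ) - 1, by omega⟩ : Fin (n + 1)) : ℕ) + 1 = (x.2 : ℕ)
        simp only [Fin.val_mk]
        omega
      · show μ.val q' ≤ (μ.toLevel ⟨(x.2 : ℕ) - 1, by omega⟩).val
          (q', ⟨(x.2 : ℕ) - 1, by omega⟩)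
        simp [SubProb.toLevel]
  exact key

end Dev5
section Dev6

variable {Q : Type u} [Fintype Q] {AP : Type w}

/-- The dual (negation) of a safety formula, as a liveness formula. -/
def SafeF.dual : SafeF AP → LiveF AP
  | .tt => .ff
  | .ff => .tt
  | .atom a => .natom a
  | .natom a => .atom a
  | .and φ ψ => .or φ.dual ψ.dual
  | .or φ ψ => .and φ.dual ψ.dual
  | .pnextLt p h0 h1 ψ => .nnextLt p h0 h1 ψ
  | .pnextLe p h0 h1 ψ => .nnextLe p h0 h1 ψ
  | .puntilLt p h0 h1 ψ1 ψ2 => .nuntilLt p h0 h1 ψ1 ψ2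
  | .puntilLe p h0 h1 ψ1 ψ2 => .nuntilLe p h0 h1 ψ1 ψ2

theorem SafeF.dual_strict : ∀ ψ : SafeF AP, ψ.weak → ψ.dual.strict
  | .tt, _ => trivial
  | .ff, _ => trivial
  | .atom a, _ => trivial
  | .natom a, _ => trivial
  | .and φ ψ, h => by
      rw [SafeF.weak] at h
      exact ⟨φ.dual_strict h.1, ψ.dual_strict h.2⟩
  | .or φ ψ, h => by
      rw [SafeF.weak] at h
      exact ⟨φ.dual_strict h.1, ψ.dual_strict h.2⟩
  | .pnextLt p h0 h1 ψ, h => by rw [SafeF.weak] at h; exact h.elim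
  | .pnextLe p h0 h1 ψ, h => h
  | .puntilLt p h0 h1 ψ1 ψ2, h => by rw [SafeF.weak] at h; exact h.elim
  | .puntilLe p h0 h1 ψ1 ψ2, h => h

theorem not_satS_iff_satL_dual (M : MDP Q AP) :
    ∀ (ψ : SafeF AP) (q : Q), ¬ satS M ψ q ↔ satL M ψ.dual q
  | .tt, q => by rw [satS, SafeF.dual, satL]; simp
  | .ff, q => by rw [satS, SafeF.dual, satL]; simp
  | .atom a, q => by rw [satS, SafeF.dual, satL]
  | .natom a, q => by rw [satS, SafeF.dual, satL]; exact not_not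
  | .and φ ψ, q => by
      rw [satS, SafeF.dual, satL, not_and_or, not_satS_iff_satL_dual M φ q,
        not_satS_iff_satL_dual M ψ q]
  | .or φ ψ, q => by
      rw [satS, SafeF.dual, satL, not_or, not_satS_iff_satL_dual M φ q,
        not_satS_iff_satL_dual M ψ q]
  | .pnextLt p h0 h1 ψ, q => by rw [satS, SafeF.dual, satL]
  | .pnextLe p h0 h1 ψ, q => by rw [satS, SafeF.dual, satL]
  | .puntilLt p h0 h1 ψ1 ψ2, q => by rw [satS, SafeF.dual, satL]
  | .puntilLe p h0 h1 ψ1 ψ2, q => by rw [satS, SafeF.dual, satL]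

end Dev6
section Dev7

variable {Q : Type u} [Fintype Q] {AP : Type w}

/-- States of the tree unfolding of `M` rooted at `r`, of depth `k`: valid paths from `r`. -/
def TState (M : MDP Q AP) (r : Q) (k : ℕ) : Type :=
  Σ j : Fin (k + 1), {p : Fin ((j : ℕ) + 1) → Fin (Fintype.card Q) //
    p ⟨0, Nat.succ_pos _⟩ = Fintype.equivFin Q r ∧
    ∀ i : ℕ, ∀ h : i + 1 < (j : ℕ) + 1,
      ∃ μ ∈ M.trans ((Fintype.equivFin Q).symm (p ⟨i, by omega⟩)),
        0 < μ.val ((Fintype.equivFin Q).symm (p ⟨i + 1, h⟩))}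

noncomputable instance instFintypeTState (M : MDP Q AP) (r : Q) (k : ℕ) :
    Fintype (TState M r k) :=
  inferInstanceAs (Fintype (Σ j : Fin (k + 1), {p : Fin ((j : ℕ) + 1) → Fin (Fintype.card Q) //
    p ⟨0, Nat.succ_pos _⟩ = Fintype.equivFin Q r ∧
    ∀ i : ℕ, ∀ h : i + 1 < (j : ℕ) + 1,
      ∃ μ ∈ M.trans ((Fintype.equivFin Q).symm (p ⟨i, by omega⟩)),
        0 < μ.val ((Fintype.equivFin Q).symm (p ⟨i + 1, h⟩))}))

variable {M : MDP Q AP} {r : Q} {k : ℕ}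

/-- The current (last) state of a path. -/
def tcur (x : TState M r k) : Q :=
  (Fintype.equivFin Q).symm (x.2.1 ⟨(x.1 : ℕ), Nat.lt_succ_self _⟩)

theorem fun_congr {α : Type*} {m : ℕ} (p : Fin m → α) (a b : ℕ) (ha : a < m) (hb : b < m)
    (h : a = b) : p ⟨a, ha⟩ = p ⟨b, hb⟩ := by subst h; rfl

theorem tstate_ext (x y : TState M r k) (h1 : (x.1 : ℕ) = (y.1 : ℕ))
    (h2 : ∀ i (hi : i < (x.1 : ℕ) + 1) (hi' : i < (y.1 : ℕ) + 1),
      x.2.1 ⟨i, hi⟩ = y.2.1 ⟨i, hi'⟩) : x = y := by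
  obtain ⟨⟨j, hj⟩, p, hp⟩ := x
  obtain ⟨⟨j', hj'⟩, p', hp'⟩ := y
  simp only [Fin.val_mk] at h1
  subst h1
  refine congrArg _ (Subtype.ext (funext fun i => ?_))
  rcases i with ⟨i, hi⟩
  exact h2 i hi hi

/-- The value function of the pushforward of `μ` along extension of the path `x`. -/
def pushVal (x : TState M r k) (μ : SubProb Q) (y : TState M r k) : ℝ :=
  if hy : (y.1 : ℕ) = (x.1 : ℕ) + 1 then
    (if (∀ i (hi : i < (x.1 : ℕ) + 1), y.2.1 ⟨i, by omega⟩ = x.2.1 ⟨i, hi⟩) then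
      μ.val (tcur y) else 0)
  else 0

theorem pushVal_nonneg (x : TState M r k) (μ : SubProb Q) (y : TState M r k) :
    0 ≤ pushVal x μ y := by
  rw [pushVal]
  split
  · split
    · exact μ.nonneg _
    · exact le_refl 0
  · exact le_refl 0

theorem pushVal_cases (x : TState M r k) (μ : SubProb Q) (y : TState M r k)
    (h : pushVal x μ y ≠ 0) :
    (y.1 : ℕ) = (x.1 : ℕ) + 1 ∧
    (∀ i (hi : i < (x.1 : ℕ) + 1) (hi' : i < (y.1 : ℕ) + 1), y.2.1 ⟨i, hi'⟩ = x.2.1 ⟨i, hi⟩) ∧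
    pushVal x μ y = μ.val (tcur y) := by
  rw [pushVal] at h ⊢
  split at h
  · rename_i hy
    split at h
    · rename_i hpre
      refine ⟨hy, fun i hi hi' => hpre i hi, ?_⟩
      rw [dif_pos hy, if_pos hpre]
    · exact absurd rfl h
  · exact absurd rfl h

theorem pushVal_inj (x : TState M r k) (μ : SubProb Q) (y y' : TState M r k)
    (h : pushVal x μ y ≠ 0) (h' : pushVal x μ y' ≠ 0) (hc : tcur y = tcur y') : y = y' := by
  obtain ⟨hy, hpre, _⟩ := pushVal_cases x μ y h
  obtain ⟨hy', hpre', _⟩ := pushVal_cases x μ y' h'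
  apply tstate_ext
  · rw [hy, hy']
  · intro i hi hi'
    rcases Nat.lt_or_ge i ((x.1 : ℕ) + 1) with hlt | hge
    · rw [hpre i hlt hi, hpre' i hlt hi']
    · have hiy : i = (y.1 : ℕ) := by omega
      have hiy' : i = (y'.1 : ℕ) := by omega
      rw [fun_congr y.2.1 i (y.1 : ℕ) hi (Nat.lt_succ_self _) hiy,
        fun_congr y'.2.1 i (y'.1 : ℕ) hi' (Nat.lt_succ_self _) hiy']
      exact (Fintype.equivFin Q).symm.injective hc

/-- The pushforward of `μ` along extension of the path `x`. -/
def pushT (x : TState M r k) (μ : SubProb Q) : SubProb (TState M r k) where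
  val := pushVal x μ
  nonneg := pushVal_nonneg x μ
  sum_le_one := by
    calc ∑ y, pushVal x μ y ≤ ∑ q', μ.val q' := by
          apply sum_le_of_inj _ _ (fun q' => μ.nonneg q') (fun y _ => tcur y)
            (fun y hy y' hy' => pushVal_inj x μ y y' hy hy')
          intro y hy
          exact le_of_eq (pushVal_cases x μ y hy).2.2
      _ ≤ 1 := μ.sum_le_one

/-- The depth-`k` tree unfolding of `M` rooted at `r`. -/
def treeMDP (M : MDP Q AP) (r : Q) (k : ℕ) : MDP (TState M r k) AP where
  init := ⟨⟨0, Nat.succ_pos _⟩, fun _ => Fintype.equivFin Q r, rfl, by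
    intro i h
    simp only [Fin.val_mk] at h
    omega⟩
  trans := fun x =>
    if hx : (x.1 : ℕ) = k then {SubProb.zero _}
    else (M.trans (tcur x)).image (pushT x)
  trans_nonempty := by
    intro x
    split
    · simp
    · exact (M.trans_nonempty _).image _
  label := fun x => M.label (tcur x)

/-- Extension of a path by one more transition. -/
def text (x : TState M r k) (hx : (x.1 : ℕ) < k) (q' : Q)
    (hq' : ∃ μ ∈ M.trans (tcur x), 0 < μ.val q') : TState M r k := by
  refine ⟨⟨(x.1 : ℕ) + 1, by omega⟩,
    fun i => if hi : (i : ℕ) < (x.1 : ℕ) + 1 then x.2.1 ⟨i, hi⟩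
      else Fintype.equivFin Q q', ?_, ?_⟩
  · simp only [Fin.val_mk]
    rw [dif_pos (Nat.succ_pos _)]
    exact x.2.2.1
  · intro i h
    simp only [Fin.val_mk] at h ⊢
    rcases Nat.lt_or_ge (i + 1) ((x.1 : ℕ) + 1) with hlt | hge
    · rw [dif_pos hlt, dif_pos (by omega : i < (x.1 : ℕ) + 1)]
      exact x.2.2.2 i hlt
    · have hieq : i = (x.1 : ℕ) := by omega
      rw [dif_pos (by omega : i < (x.1 : ℕ) + 1), dif_neg (by omega)]
      rw [fun_congr x.2.1 i (x.1 : ℕ) (by omega) (Nat.lt_succ_self _) hieq,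
        Equiv.symm_apply_apply]
      exact hq'

theorem tcur_text (x : TState M r k) (hx : (x.1 : ℕ) < k) (q' : Q)
    (hq' : ∃ μ ∈ M.trans (tcur x), 0 < μ.val q') : tcur (text x hx q' hq') = q' := by
  show (Fintype.equivFin Q).symm
    (if hi : (x.1 : ℕ) + 1 < (x.1 : ℕ) + 1 then _ else Fintype.equivFin Q q') = q'
  rw [dif_neg (by omega), Equiv.symm_apply_apply]

theorem pushVal_text (x : TState M r k) (hx : (x.1 : ℕ) < k) (q' : Q)
    (hq' : ∃ μ ∈ M.trans (tcur x), 0 < μ.val q') (μ : SubProb Q) :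
    pushVal x μ (text x hx q' hq') = μ.val q' := by
  rw [pushVal]
  rw [dif_pos (by rfl : ((text x hx q' hq').1 : ℕ) = (x.1 : ℕ) + 1)]
  rw [if_pos, tcur_text]
  intro i hi
  show (if h : i < (x.1 : ℕ) + 1 then x.2.1 ⟨i, h⟩ else Fintype.equivFin Q q') = x.2.1 ⟨i, hi⟩
  rw [dif_pos hi]

theorem treeMDP_trans_of_lt (x : TState M r k) (hx : (x.1 : ℕ) < k) :
    (treeMDP M r k).trans x = (M.trans (tcur x)).image (pushT x) := by
  show (if hx : (x.1 : ℕ) = k then _ else _) = _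
  rw [dif_neg (by omega)]

/-- The tree unfolding layer-covers `M`. -/
theorem treeMDP_hstep :
    ∀ x : TState M r k, 1 ≤ k - (x.1 : ℕ) → ∀ μ ∈ M.trans (tcur x),
      ∃ ν ∈ (treeMDP M r k).trans x, ∀ q', μ.val q' ≠ 0 →
        ∃ y, tcur y = q' ∧ (k - (y.1 : ℕ)) + 1 = k - (x.1 : ℕ) ∧ μ.val q' ≤ ν.val y := by
  intro x hx μ hμ
  have hxk : (x.1 : ℕ) < k := by omega
  refine ⟨pushT x μ, ?_, ?_⟩
  · rw [treeMDP_trans_of_lt x hxk]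
    exact Finset.mem_image_of_mem _ hμ
  · intro q' hq'
    have hpos : 0 < μ.val q' := lt_of_le_of_ne (μ.nonneg q') (Ne.symm hq')
    have hex : ∃ μ' ∈ M.trans (tcur x), 0 < μ'.val q' := ⟨μ, hμ, hpos⟩
    refine ⟨text x hxk q' hex, tcur_text x hxk q' hex, ?_, ?_⟩
    · show (k - ((x.1 : ℕ) + 1)) + 1 = k - (x.1 : ℕ)
      omega
    · show μ.val q' ≤ pushVal x μ (text x hxk q' hex)
      rw [pushVal_text]

end Dev7
section Dev8

variable {Q : Type u} [Fintype Q] {AP : Type w} {M : MDP Q AP} {r : Q} {k : ℕ}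

theorem level_zero_eq_init (y : TState M r k) (h : (y.1 : ℕ) = 0) :
    y = (treeMDP M r k).init := by
  apply tstate_ext
  · rw [h]; rfl
  · intro i hi hi'
    have hi0 : i = 0 := by omega
    subst hi0
    exact y.2.2.1

theorem edge_dest {x y : TState M r k} (h : (treeMDP M r k).edge x y) :
    (x.1 : ℕ) < k ∧ (y.1 : ℕ) = (x.1 : ℕ) + 1 ∧
    (∀ i (hi : i < (x.1 : ℕ) + 1) (hi' : i < (y.1 : ℕ) + 1),
      y.2.1 ⟨i, hi'⟩ = x.2.1 ⟨i, hi⟩) := by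
  obtain ⟨μT, hmem, hpos⟩ := h
  by_cases hxk : (x.1 : ℕ) = k
  · have hz : μT = SubProb.zero _ := by
      rw [show (treeMDP M r k).trans x = {SubProb.zero _} from by
        show (if hx : (x.1 : ℕ) = k then _ else _) = _
        rw [dif_pos hxk]] at hmem
      exact Finset.mem_singleton.mp hmem
    rw [hz] at hpos
    exact absurd hpos (lt_irrefl 0)
  · have hxk' : (x.1 : ℕ) < k := by have := x.1.isLt; omega
    rw [treeMDP_trans_of_lt x hxk'] at hmem
    obtain ⟨μ, hμ, rfl⟩ := Finset.mem_image.mp hmem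
    have hne : pushVal x μ y ≠ 0 := ne_of_gt hpos
    obtain ⟨h1, h2, _⟩ := pushVal_cases x μ y hne
    exact ⟨hxk', h1, h2⟩

/-- The parent of a non-root node in the tree. -/
def tparent (y : TState M r k) (h : (y.1 : ℕ) ≠ 0) : TState M r k := by
  refine ⟨⟨(y.1 : ℕ) - 1, by have := y.1.isLt; omega⟩,
    fun i => y.2.1 ⟨(i : ℕ), by have := i.isLt; simp only [Fin.val_mk] at this; omega⟩,
    ?_, ?_⟩
  · exact y.2.2.1
  · intro i hi
    simp only [Fin.val_mk] at hi ⊢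
    exact y.2.2.2 i (by have := y.1.isLt; omega)

theorem tparent_level (y : TState M r k) (h : (y.1 : ℕ) ≠ 0) :
    ((tparent y h).1 : ℕ) = (y.1 : ℕ) - 1 := rfl

theorem edge_tparent (y : TState M r k) (h : (y.1 : ℕ) ≠ 0) :
    (treeMDP M r k).edge (tparent y h) y := by
  have hy := y.1.isLt
  have hm : ((tparent y h).1 : ℕ) < k := by rw [tparent_level]; omega
  obtain ⟨μ, hμ, hpos⟩ := y.2.2.2 ((y.1 : ℕ) - 1) (by omega)
  have hcur : tcur (tparent y h) =
      (Fintype.equivFin Q).symm (y.2.1 ⟨(y.1 : ℕ) - 1, by omega⟩) := rfl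
  refine ⟨pushT (tparent y h) μ, ?_, ?_⟩
  · rw [treeMDP_trans_of_lt _ hm]
    apply Finset.mem_image_of_mem
    rw [hcur]
    exact hμ
  · show 0 < pushVal (tparent y h) μ y
    rw [pushVal, dif_pos (show (y.1 : ℕ) = ((tparent y h).1 : ℕ) + 1 from by
      rw [tparent_level]; omega)]
    split
    · rw [show tcur y = (Fintype.equivFin Q).symm (y.2.1 ⟨(y.1 : ℕ) - 1 + 1, by omega⟩) from
        congrArg _ (fun_congr y.2.1 _ _ _ _ (by omega))]
      exact hpos
    · rename_i hcond
      exact absurd (fun i hi => rfl) hcond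

theorem edge_eq_tparent {x y : TState M r k} (hy : (y.1 : ℕ) ≠ 0)
    (h : (treeMDP M r k).edge x y) : x = tparent y hy := by
  obtain ⟨hxk, hlev, hpre⟩ := edge_dest h
  apply tstate_ext
  · rw [tparent_level]; omega
  · intro i hi hi'
    calc x.2.1 ⟨i, hi⟩ = y.2.1 ⟨i, by omega⟩ := (hpre i hi (by omega)).symm
      _ = (tparent y hy).2.1 ⟨i, hi'⟩ := rfl

theorem tree_is_tree : IsTreeGraph (treeMDP M r k).edge (treeMDP M r k).init := by
  have hreach : ∀ (n : ℕ) (y : TState M r k), (y.1 : ℕ) = n →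
      Relation.ReflTransGen (treeMDP M r k).edge (treeMDP M r k).init y := by
    intro n
    induction n with
    | zero =>
      intro y h
      rw [level_zero_eq_init y h]
    | succ n ih =>
      intro y h
      have hy0 : (y.1 : ℕ) ≠ 0 := by omega
      exact Relation.ReflTransGen.tail
        (ih (tparent y hy0) (by rw [tparent_level]; omega)) (edge_tparent y hy0)
  refine ⟨?_, ?_, fun y => hreach _ y rfl⟩
  · intro x hedge
    have h1 := (edge_dest hedge).2.1
    have h0 : (((treeMDP M r k).init).1 : ℕ) = 0 := rfl
    omega
  · intro y hy
    have hy0 : (y.1 : ℕ) ≠ 0 := fun hc => hy (level_zero_eq_init y hc)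
    exact ⟨tparent y hy0, edge_tparent y hy0, fun x hx => edge_eq_tparent hy0 hx⟩

end Dev8
section Dev9

namespace SubProb

variable {Q : Type u} {Q' : Type v} [Fintype Q] [Fintype Q']

theorem mass_zero (A : Set Q) : (SubProb.zero Q).mass A = 0 := by
  rw [mass_eq_sum_ite]
  apply Finset.sum_eq_zero
  intro q _
  split <;> rfl

theorem mass_toLeft (μ : SubProb Q) (A : Set (Q ⊕ Q')) :
    (μ.toLeft : SubProb (Q ⊕ Q')).mass A = μ.mass {a | Sum.inl a ∈ A} := by
  rw [mass_eq_sum_ite, mass_eq_sum_ite, Fintype.sum_sum_type]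
  have h2 : ∑ b : Q',
      (if Sum.inr b ∈ A then (μ.toLeft : SubProb (Q ⊕ Q')).val (Sum.inr b) else 0) = 0 :=
    Finset.sum_eq_zero (fun b _ => by split <;> rfl)
  rw [h2, add_zero]
  apply Finset.sum_congr rfl
  intro a _
  rfl

theorem mass_toRight (μ : SubProb Q') (A : Set (Q ⊕ Q')) :
    (μ.toRight : SubProb (Q ⊕ Q')).mass A = μ.mass {b | Sum.inr b ∈ A} := by
  rw [mass_eq_sum_ite, mass_eq_sum_ite, Fintype.sum_sum_type]
  have h2 : ∑ a : Q,
      (if Sum.inl a ∈ A then (μ.toRight : SubProb (Q ⊕ Q')).val (Sum.inl a) else 0) = 0 :=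
    Finset.sum_eq_zero (fun a _ => by split <;> rfl)
  rw [h2, zero_add]
  apply Finset.sum_congr rfl
  intro a _
  rfl

end SubProb

variable {Q : Type u} [Fintype Q] {AP : Type w} {M : MDP Q AP} {k : ℕ}

theorem tree_sim : (treeMDP M M.init k).Sim M := by
  refine ⟨canonRel (fun x q => tcur x = q), ⟨?_, ?_, ?_⟩,
    (Fintype.equivFin Q).symm_apply_apply M.init⟩
  · -- reflexive
    intro z
    rcases z with x | q
    · exact rfl
    · exact rfl
  · -- transitive
    intro a b c hab hbc
    rcases a with x | q <;> rcases b with y | q' <;> rcases c with z | q''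
    · exact hab.trans hbc
    · rw [show x = y from hab]; exact hbc
    · exact hbc.elim
    · exact hab.trans hbc
    · exact hab.elim
    · exact hab.elim
    · exact hbc.elim
    · exact hab.trans hbc
  · -- step condition
    intro a b hab
    rcases a with x | q <;> rcases b with y | q'
    · rw [show x = y from hab]
      exact ⟨rfl, fun μ hμ => ⟨μ, hμ, fun A hA => le_refl _⟩⟩
    · -- the interesting case : inl x related to inr q'
      have hab' : tcur x = q' := hab
      subst hab'
      constructor
      · exact rfl
      · intro μ' hμ'
        have hμ'' : μ' ∈ ((treeMDP M M.init k).trans x).image SubProb.toLeft := hμ'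
        obtain ⟨μT, hμT, rfl⟩ := Finset.mem_image.mp hμ''
        by_cases hxk : (x.1 : ℕ) = k
        · have hz : μT = SubProb.zero _ := by
            rw [show (treeMDP M M.init k).trans x = {SubProb.zero _} from by
              show (if hx : (x.1 : ℕ) = k then _ else _) = _
              rw [dif_pos hxk]] at hμT
            exact Finset.mem_singleton.mp hμT
          obtain ⟨ν, hν⟩ := M.trans_nonempty (tcur x)
          refine ⟨ν.toRight, Finset.mem_image_of_mem _ hν, ?_⟩
          intro A hA
          rw [hz, SubProb.mass_toLeft, SubProb.mass_zero]
          exact SubProb.mass_nonneg _ _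
        · have hxk' : (x.1 : ℕ) < k := by have := x.1.isLt; omega
          rw [treeMDP_trans_of_lt x hxk'] at hμT
          obtain ⟨μ, hμ, rfl⟩ := Finset.mem_image.mp hμT
          refine ⟨μ.toRight, Finset.mem_image_of_mem _ hμ, ?_⟩
          intro A hA
          rw [SubProb.mass_toLeft, SubProb.mass_toRight,
            SubProb.mass_eq_sum_ite, SubProb.mass_eq_sum_ite]
          have hne : ∀ y : TState M M.init k,
              (if y ∈ {a | Sum.inl a ∈ A} then (pushT x μ).val y else 0) ≠ 0 →
              Sum.inl y ∈ A ∧ pushVal x μ y ≠ 0 := by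
            intro y hy
            by_cases hin : y ∈ {a | Sum.inl a ∈ A}
            · rw [if_pos hin] at hy; exact ⟨hin, hy⟩
            · rw [if_neg hin] at hy; exact absurd rfl hy
          apply sum_le_of_inj _ _ ?hg (fun y _ => tcur y) ?inj ?hfg
          case hg =>
            intro b
            split
            · exact μ.nonneg b
            · exact le_refl 0
          case inj =>
            intro y hy y' hy' hc
            exact pushVal_inj x μ y y' (hne y hy).2 (hne y' hy').2 hc
          case hfg =>
            intro y hy
            have hmem : Sum.inr (tcur y) ∈ A := by
              rw [← hA]
              exact ⟨Sum.inl y, (hne y hy).1, rfl⟩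
            have goal' : (if y ∈ {a | Sum.inl a ∈ A} then (pushT x μ).val y else 0) ≤
                (if tcur y ∈ {b | Sum.inr b ∈ A} then μ.val (tcur y) else 0) := by
              split
              · split
                · exact le_of_eq (pushVal_cases x μ y (hne y hy).2).2.2
                · rename_i h2
                  exact absurd hmem h2
              · split
                · exact μ.nonneg _
                · exact le_refl 0
            exact goal'
    · exact hab.elim
    · rw [show q = q' from hab]
      exact ⟨rfl, fun μ hμ => ⟨μ, hμ, fun A hA => le_refl _⟩⟩

end Dev9
/-- (a) If a state `q` of an MDP satisfies a strict liveness formula, then some finite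
unrolling of the MDP rooted at `q` satisfies it. (b) Consequently, if a weak safety formula
is violated by an MDP `M`, there is an MDP `M'` whose underlying unlabeled graph is a tree
with `M' ≼ M` and `M'` violating the formula. -/
theorem stmt13 {Q : Type u} {AP : Type w} [Fintype Q] (M : MDP Q AP) :
    (∀ psiSL : LiveF AP, psiSL.strict → ∀ q : Q, satL M psiSL q →
      ∃ k : ℕ, satL (M.unroll q k) psiSL (M.unroll q k).init) ∧
    (∀ psiWS : SafeF AP, psiWS.weak → ¬ satS M psiWS M.init →
      ∃ (Q' : Type) (i : Fintype Q') (M' : @MDP Q' i AP),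
        IsTreeGraph (@MDP.edge Q' AP i M') M'.init ∧
        @MDP.Sim Q' Q AP i _ M' M ∧
        ¬ @satS Q' AP i M' psiWS M'.init) := by
  constructor
  · intro psiSL hstrict q h
    exact part_a M psiSL hstrict q h
  · intro psiWS hweak hns
    have hL : satL M psiWS.dual M.init := (not_satS_iff_satL_dual M psiWS M.init).1 hns
    obtain ⟨n, hn⟩ := satL_satLN M psiWS.dual (psiWS.dual_strict hweak)
    refine ⟨TState M M.init n, instFintypeTState M M.init n, treeMDP M M.init n,
      tree_is_tree, tree_sim, ?_⟩
    rw [← not_satS_iff_satL_dual M psiWS M.init] at hL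
    rw [not_satS_iff_satL_dual]
    have hcur0 : tcur (treeMDP M M.init n).init = M.init :=
      (Fintype.equivFin Q).symm_apply_apply M.init
    apply satLN_transfer M (treeMDP M M.init n) tcur (fun x => n - (x.1 : ℕ))
      (fun x => rfl) treeMDP_hstep psiWS.dual n ((treeMDP M M.init n).init) ?_ ?_
    · rw [hcur0]
      exact hn M.init ((not_satS_iff_satL_dual M psiWS M.init).1 hns)
    · show n ≤ n - ((⟨0, Nat.succ_pos _⟩ : Fin (n + 1)) : ℕ)
      simp
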